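/- Let m > 0, s0 > 0, α ∈ (0,1) and f(u) = u(1 − u)(2u − 1 + α). There exists a constant C₅ < ∞ (depending only on m, s0, α) such that for every n ∈ ℕ with n ≥ 1 and every semi-discrete solution U : [0,∞) × ℤ → [0,1]: sup_{t ≥ 1, k ∈ ℤ} n |U(t,k+1) − U(t,k)| ≤ C₅. -/

import Mathlib

open Set Filter Topology

lemma f_lip (α : ℝ) (hα : α ∈ Set.Ioo (0 : ℝ) 1) (f : ℝ → ℝ)
    (hf : ∀ u, f u = u * (1 - u) * (2 * u - 1 + α)) :
    ∀ u v : ℝ, u ∈ Set.Icc (0:ℝ) 1 → v ∈ Set.Icc (0:ℝ) 1 →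
      (u - v) * (f u - f v) ≤ 7 * (u - v)^2 := by
  intro u v hu hv
  obtain ⟨hu0, hu1⟩ := hu
  obtain ⟨hv0, hv1⟩ := hv
  obtain ⟨ha0, ha1⟩ := hα
  rw [hf, hf]
  have hid : (u - v) * (u * (1 - u) * (2 * u - 1 + α) - v * (1 - v) * (2 * v - 1 + α))
      = (u - v)^2 * (-2*(u^2 + u*v + v^2) + (3 - α)*(u + v) + (α - 1)) := by ring
  rw [hid]
  have hB : (-2*(u^2 + u*v + v^2) + (3 - α)*(u + v) + (α - 1)) ≤ 7 := by
    nlinarith [mul_nonneg hu0 hv0, sq_nonneg u, sq_nonneg v]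
  nlinarith [sq_nonneg (u - v), mul_le_mul_of_nonneg_left hB (sq_nonneg (u - v))]

lemma f_bd (α : ℝ) (hα : α ∈ Set.Ioo (0 : ℝ) 1) (f : ℝ → ℝ)
    (hf : ∀ u, f u = u * (1 - u) * (2 * u - 1 + α)) :
    ∀ u : ℝ, u ∈ Set.Icc (0:ℝ) 1 → u * f u ≤ 2 := by
  intro u hu
  obtain ⟨hu0, hu1⟩ := hu
  obtain ⟨ha0, ha1⟩ := hα
  rw [hf]
  nlinarith [sq_nonneg u, mul_nonneg hu0 (sub_nonneg.2 hu1), sq_nonneg (1-u),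
    mul_nonneg (mul_nonneg hu0 hu0) (sub_nonneg.2 hu1),
    mul_nonneg (mul_nonneg (mul_nonneg hu0 hu0) (sub_nonneg.2 hu1)) ha0.le]



lemma discrete_max_principle (c a b : ℝ) (hc : 0 ≤ c) (hab : a ≤ b)
    (Y Y' : ℝ → ℤ → ℝ) (B : ℝ)
    (hbd : ∀ t ∈ Set.Icc a b, ∀ k : ℤ, Y t k ≤ B)
    (hcont : ∀ k : ℤ, ContinuousOn (fun t => Y t k) (Set.Icc a b))
    (hderiv : ∀ k : ℤ, ∀ t ∈ Set.Ioc a b, HasDerivAt (fun s => Y s k) (Y' t k) t)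
    (hsub : ∀ k : ℤ, ∀ t ∈ Set.Ioc a b, Y' t k ≤ c * (Y t (k+1) - 2 * Y t k + Y t (k-1)))
    (S : ℝ) (hS : ∀ k : ℤ, Y a k ≤ S) :
    ∀ t ∈ Set.Icc a b, ∀ k : ℤ, Y t k ≤ S := by
  intro tS htS kS
  set D : ℝ := 1 + (kS:ℝ)^2 + (2*c+1)*(b-a) with hD
  have hD0 : 0 < D := by
    have h0 : 0 ≤ (2*c+1)*(b-a) := mul_nonneg (by linarith) (by linarith)
    nlinarith [sq_nonneg ((kS:ℝ))]
  have key : ∀ ε : ℝ, 0 < ε → Y tS kS ≤ S + ε * D := by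
    intro ε hε
    set Yε : ℝ → ℤ → ℝ := fun t k => Y t k - ε * (1 + (k:ℝ)^2 + (2*c+1)*(t-a)) with hYε
    have hcontε : ∀ k : ℤ, ContinuousOn (fun t => Yε t k) (Set.Icc a b) := by
      intro k
      exact (hcont k).sub (by fun_prop)
    obtain ⟨N, hN⟩ := exists_nat_ge ((B - Y a 0)/ε)
    set K : Finset ℤ := Finset.Icc (-(N:ℤ)) (N:ℤ) with hK
    have hK0 : (0:ℤ) ∈ K := by
      simp [hK, Finset.mem_Icc]
    have hmaxex : ∀ k : ℤ, ∃ t ∈ Set.Icc a b, IsMaxOn (fun s => Yε s k) (Set.Icc a b) t :=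
      fun k => isCompact_Icc.exists_isMaxOn (Set.nonempty_Icc.2 hab) (hcontε k)
    choose tm htm hismax using hmaxex
    obtain ⟨kb, hkbK, hkbmax⟩ := K.exists_max_image (fun k => Yε (tm k) k) ⟨0, hK0⟩
    have haIcc : a ∈ Set.Icc a b := ⟨le_refl a, hab⟩
    have hglob : ∀ t ∈ Set.Icc a b, ∀ k : ℤ, Yε t k ≤ Yε (tm kb) kb := by
      intro t ht k
      by_cases hk : k ∈ K
      · exact le_trans (hismax k ht) (hkbmax k hk)
      · have hkN : (N:ℝ) + 1 ≤ |(k:ℝ)| := by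
          rw [hK, Finset.mem_Icc] at hk
          push_neg at hk
          have hd : k < -(N:ℤ) ∨ (N:ℤ) < k := by
            by_contra hcc
            push_neg at hcc
            exact absurd (hk hcc.1) (not_lt.2 hcc.2)
          rcases hd with hd | hd
          · refine le_abs.2 (Or.inr ?_)
            have : (N:ℤ) + 1 ≤ -k := by omega
            exact_mod_cast this
          · refine le_abs.2 (Or.inl ?_)
            have : (N:ℤ) + 1 ≤ k := by omega
            exact_mod_cast this
        have hk2 : (N:ℝ) + 1 ≤ (k:ℝ)^2 := by
          have h1 : (N:ℝ) + 1 ≤ |(k:ℝ)|^2 := by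
            nlinarith [abs_nonneg (k:ℝ), hkN]
          simpa [sq_abs] using h1
        have hstep : Yε t k < Yε a 0 := by
          have h3 : Y t k ≤ B := hbd t ht k
          have h4 : (B - Y a 0)/ε ≤ (N:ℝ) := hN
          have h5 : B - Y a 0 ≤ ε * N := by
            rw [div_le_iff₀ hε] at h4; linarith [h4]
          have h6 : 0 ≤ (2*c+1)*(t-a) := by
            have : 0 ≤ t - a := by linarith [ht.1]
            positivity
          have h7 : ε * ((N:ℝ)+1) ≤ ε * (k:ℝ)^2 := by
            exact mul_le_mul_of_nonneg_left hk2 hε.le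
          simp only [hYε]
          push_cast
          nlinarith [h7]
        calc Yε t k ≤ Yε a 0 := hstep.le
          _ ≤ Yε (tm 0) 0 := hismax 0 haIcc
          _ ≤ Yε (tm kb) kb := hkbmax 0 hK0
    rcases eq_or_lt_of_le (htm kb).1 with hta | hta
    · -- max at initial time
      have h1 : Yε tS kS ≤ Yε (tm kb) kb := hglob tS htS kS
      have h2 : Y (tm kb) kb - ε * (1 + (kb:ℝ)^2 + (2*c+1)*(tm kb - a)) ≤ S := by
        rw [← hta]
        nlinarith [hS kb, sq_nonneg ((kb:ℝ)), hε]
      have h3 : ε * (1 + (kS:ℝ)^2 + (2*c+1)*(tS-a)) ≤ ε * D := by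
        apply mul_le_mul_of_nonneg_left _ hε.le
        have h4 : (2*c+1)*(tS-a) ≤ (2*c+1)*(b-a) := by
          apply mul_le_mul_of_nonneg_left _ (by linarith)
          linarith [htS.2]
        simp [hD]; linarith
      simp only [hYε] at h1
      linarith
    · -- interior / terminal max : contradiction
      exfalso
      set tb := tm kb with htb
      have htIoc : tb ∈ Set.Ioc a b := ⟨hta, (htm kb).2⟩
      have hpen : HasDerivAt (fun s : ℝ => ε * (1 + (kb:ℝ)^2 + (2*c+1)*(s-a))) (ε * (2*c+1)) tb := by
        have h1 : HasDerivAt (fun s : ℝ => s - a) 1 tb := (hasDerivAt_id tb).sub_const a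
        have h2 := ((h1.const_mul (2*c+1)).const_add (1 + (kb:ℝ)^2)).const_mul ε
        refine h2.congr_deriv ?_
        ring
      have hdYε : HasDerivAt (fun s => Yε s kb) (Y' tb kb - ε * (2*c+1)) tb :=
        (hderiv kb tb htIoc).sub hpen
      have hder_nonneg : 0 ≤ Y' tb kb - ε * (2*c+1) := by
        rw [hasDerivAt_iff_tendsto_slope] at hdYε
        have h5 : Tendsto (slope (fun s => Yε s kb) tb) (𝓝[<] tb)
            (𝓝 (Y' tb kb - ε * (2*c+1))) :=
          hdYε.mono_left (nhdsWithin_mono _ (fun x hx => ne_of_lt hx))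
        have hev : ∀ᶠ s in 𝓝[<] tb, 0 ≤ slope (fun s => Yε s kb) tb s := by
          filter_upwards [Ioo_mem_nhdsLT_of_mem (Set.right_mem_Ioc.2 hta)] with s hs
          have hnum : Yε s kb - Yε tb kb ≤ 0 := by
            have : Yε s kb ≤ Yε (tm kb) kb := hglob s ⟨hs.1.le, hs.2.le.trans (htm kb).2⟩ kb
            linarith [this]
          have hden : s - tb < 0 := by linarith [hs.2]
          rw [slope_def_field]
          exact div_nonneg_of_nonpos (by linarith) hden.le
        exact ge_of_tendsto h5 hev
      have hD2 : Y tb (kb+1) - 2 * Y tb kb + Y tb (kb-1) ≤ 2 * ε := by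
        have h6 : Yε tb (kb+1) ≤ Yε tb kb := hglob tb ⟨hta.le, (htm kb).2⟩ (kb+1)
        have h7 : Yε tb (kb-1) ≤ Yε tb kb := hglob tb ⟨hta.le, (htm kb).2⟩ (kb-1)
        simp only [hYε] at h6 h7
        push_cast at h6 h7
        nlinarith [h6, h7]
      have h8 := hsub kb tb htIoc
      nlinarith [mul_le_mul_of_nonneg_left hD2 hc]
  -- conclude
  by_contra hcon
  push_neg at hcon
  have hkey := key ((Y tS kS - S)/(2*D)) (div_pos (by linarith) (by linarith))
  have heq : (Y tS kS - S)/(2*D) * D = (Y tS kS - S)/2 := by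
    field_simp
  rw [heq] at hkey
  linarith

def IsSemiDiscreteSolution (m s0 : ℝ) (f : ℝ → ℝ) (n : ℕ) (U : ℝ → ℤ → ℝ) : Prop :=
  (∀ t, 0 ≤ t → ∀ k : ℤ, U t k ∈ Set.Icc (0 : ℝ) 1) ∧
  ∀ k : ℤ, ∀ t, 0 ≤ t →
    HasDerivWithinAt (fun s => U s k)
      (m / 2 * (n : ℝ) ^ 2 * (U t (k + 1) - 2 * U t k + U t (k - 1)) + s0 * f (U t k))
      (Set.Ici 0) t

set_option maxHeartbeats 2000000 in
theorem semi_discrete_gradient_bound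
    (m s0 α : ℝ) (hm : 0 < m) (hs0 : 0 < s0) (hα : α ∈ Set.Ioo (0 : ℝ) 1)
    (f : ℝ → ℝ) (hf : ∀ u, f u = u * (1 - u) * (2 * u - 1 + α)) :
    ∃ C₅ : ℝ, ∀ n : ℕ, 1 ≤ n →
      ∀ U : ℝ → ℤ → ℝ, IsSemiDiscreteSolution m s0 f n U →
      ∀ t : ℝ, 1 ≤ t → ∀ k : ℤ, (n : ℝ) * |U t (k + 1) - U t k| ≤ C₅ := by
  refine ⟨Real.sqrt (2*(1+14*s0)*(1+4*s0)/m), ?_⟩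
  intro n hn U hU t0 ht0 k0
  obtain ⟨hbox, hode⟩ := hU
  set a : ℝ := t0 - 1 with haa
  have ha0 : 0 ≤ a := by simp only [haa]; linarith
  have hat0 : a ≤ t0 := by simp only [haa]; linarith
  have hn0 : (0:ℝ) < (n:ℝ) := by
    have : (1:ℝ) ≤ (n:ℝ) := by exact_mod_cast hn
    linarith
  set c : ℝ := m / 2 * (n:ℝ)^2 with hcc
  have hc0 : 0 < c := by positivity
  set lam : ℝ := 2*(1+14*s0)/(m*(n:ℝ)^2) with hlam
  have hlam0 : 0 < lam := by positivity
  have hclam : c * lam = 1 + 14*s0 := by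
    simp only [hcc, hlam]
    field_simp
  have hbox' : ∀ t, a ≤ t → ∀ k : ℤ, 0 ≤ U t k ∧ U t k ≤ 1 := by
    intro t ht k
    exact ⟨(hbox t (ha0.trans ht) k).1, (hbox t (ha0.trans ht) k).2⟩
  set u' : ℝ → ℤ → ℝ := fun t k =>
    c * (U t (k+1) - 2*U t k + U t (k-1)) + s0 * f (U t k) with hu'
  have hUderiv : ∀ k : ℤ, ∀ t ∈ Set.Ioc a t0, HasDerivAt (fun s => U s k) (u' t k) t := by
    intro k t ht
    have htp : 0 < t := lt_of_le_of_lt ha0 ht.1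
    exact (hode k t htp.le).hasDerivAt (Ici_mem_nhds htp)
  have hcontU : ∀ k : ℤ, ContinuousOn (fun t => U t k) (Set.Icc a t0) := by
    intro k t ht
    exact ((hode k t (ha0.trans ht.1)).continuousWithinAt).mono
      (fun x hx => ha0.trans hx.1)
  set Y : ℝ → ℤ → ℝ := fun t k =>
    (t - a)*(U t (k+1) - U t k)^2 + lam*(U t k)^2 - 4*lam*s0*(t-a) with hY
  set Y' : ℝ → ℤ → ℝ := fun t k =>
    (U t (k+1) - U t k)^2 + (t-a)*(2*(U t (k+1) - U t k)*(u' t (k+1) - u' t k))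
      + lam*(2*U t k*(u' t k)) - 4*lam*s0 with hY'
  have hbd : ∀ t ∈ Set.Icc a t0, ∀ k : ℤ, Y t k ≤ 1 + lam := by
    intro t ht k
    obtain ⟨hq0, hq1⟩ := hbox' t ht.1 (k+1)
    obtain ⟨hr0, hr1⟩ := hbox' t ht.1 k
    have h1 : 0 ≤ t - a := by linarith [ht.1]
    have h2 : t - a ≤ 1 := by simp only [haa] at *; linarith [ht.2]
    simp only [hY]
    have hw1 : (U t (k+1) - U t k)^2 ≤ 1 := by nlinarith
    have hw2 : (t-a)*(U t (k+1) - U t k)^2 ≤ 1 := by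
      nlinarith [sq_nonneg (U t (k+1) - U t k)]
    have hw3 : lam*(U t k)^2 ≤ lam := by
      have h5 : (U t k)^2 ≤ 1 := by nlinarith
      have h6 := mul_le_mul_of_nonneg_left h5 hlam0.le
      linarith
    have hw4 : 0 ≤ 4*lam*s0*(t-a) := by positivity
    linarith
  have hYcont : ∀ k : ℤ, ContinuousOn (fun t => Y t k) (Set.Icc a t0) := by
    intro k
    simp only [hY]
    exact ((((continuousOn_id.sub continuousOn_const).mul
      (((hcontU (k+1)).sub (hcontU k)).pow 2)).add
      (continuousOn_const.mul ((hcontU k).pow 2))).sub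
      (continuousOn_const.mul (continuousOn_id.sub continuousOn_const)))
  have hYderiv : ∀ k : ℤ, ∀ t ∈ Set.Ioc a t0, HasDerivAt (fun s => Y s k) (Y' t k) t := by
    intro k t ht
    have h1 : HasDerivAt (fun s : ℝ => s - a) 1 t := (hasDerivAt_id t).sub_const a
    have hg : HasDerivAt (fun s => U s (k+1) - U s k) (u' t (k+1) - u' t k) t :=
      (hUderiv (k+1) t ht).sub (hUderiv k t ht)
    have hg2 : HasDerivAt (fun s => (U s (k+1) - U s k)^2)
        (2*(U t (k+1) - U t k)*(u' t (k+1) - u' t k)) t := by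
      have h := hg.pow 2
      refine h.congr_deriv ?_
      push_cast
      ring
    have hu2 : HasDerivAt (fun s => lam*(U s k)^2) (lam*(2*U t k*(u' t k))) t := by
      have h := ((hUderiv k t ht).pow 2).const_mul lam
      refine h.congr_deriv ?_
      push_cast
      ring
    have h4 : HasDerivAt (fun s : ℝ => 4*lam*s0*(s-a)) (4*lam*s0) t := by
      have h := h1.const_mul (4*lam*s0)
      refine h.congr_deriv ?_
      ring
    have h5 := ((h1.mul hg2).add hu2).sub h4
    have h6 : HasDerivAt (fun s => Y s k)
        (1*(U t (k+1) - U t k)^2 + (t-a)*(2*(U t (k+1) - U t k)*(u' t (k+1) - u' t k))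
          + lam*(2*U t k*(u' t k)) - 4*lam*s0) t := by
      simp only [hY]
      exact h5
    convert h6 using 1
    simp only [hY']
    ring
  have hsub : ∀ k : ℤ, ∀ t ∈ Set.Ioc a t0, Y' t k ≤ c * (Y t (k+1) - 2*Y t k + Y t (k-1)) := by
    intro k t ht
    have hta0 : 0 < t - a := by linarith [ht.1]
    have hta1 : t - a ≤ 1 := by simp only [haa] at *; linarith [ht.2]
    obtain ⟨hp0, hp1⟩ := hbox' t ht.1.le (k+1+1)
    obtain ⟨hq0, hq1⟩ := hbox' t ht.1.le (k+1)
    obtain ⟨hr0, hr1⟩ := hbox' t ht.1.le k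
    obtain ⟨hs0', hs1'⟩ := hbox' t ht.1.le (k-1)
    simp only [hY, hY', hu', show k+1-1 = k from by ring, show k-1+1 = k from by ring]
    clear hode hUderiv hcontU hbd hYcont hYderiv hbox hbox' hY hY' hu' hcc hlam
    clear_value a c lam
    clear Y Y' u' haa
    set p := U t (k+1+1) with hp
    set q := U t (k+1) with hq
    set r := U t k with hr
    set s := U t (k-1) with hs
    clear_value p q r s
    have hlip := f_lip α hα f hf q r ⟨hq0, hq1⟩ ⟨hr0, hr1⟩
    have hfb := f_bd α hα f hf r ⟨hr0, hr1⟩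
    have hT1 : 2*(q-r)*((c*(p-2*q+r) + s0*f q) - (c*(q-2*r+s) + s0*f r))
        ≤ c*((p-q)^2 - 2*(q-r)^2 + (r-s)^2) + 14*s0*(q-r)^2 := by
      nlinarith [mul_le_mul_of_nonneg_left hlip (by linarith : (0:ℝ) ≤ 2*s0),
        mul_nonneg hc0.le (sq_nonneg (p-2*q+r)), mul_nonneg hc0.le (sq_nonneg (q-2*r+s))]
    have hT1' : (t-a)*(2*(q-r)*((c*(p-2*q+r) + s0*f q) - (c*(q-2*r+s) + s0*f r)))
        ≤ (t-a)*(c*((p-q)^2 - 2*(q-r)^2 + (r-s)^2)) + 14*s0*(q-r)^2 := by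
      have h1 := mul_le_mul_of_nonneg_left hT1 hta0.le
      rw [mul_add] at h1
      have h2 : (t-a)*(14*s0*(q-r)^2) ≤ 14*s0*(q-r)^2 := by
        nlinarith [mul_nonneg (mul_nonneg (by linarith : (0:ℝ) ≤ 14*s0) (sq_nonneg (q-r)))
          (by linarith : (0:ℝ) ≤ 1-(t-a))]
      linarith
    have hT2 : 2*r*(c*(q-2*r+s) + s0*f r)
        ≤ c*(q^2-2*r^2+s^2) - c*(q-r)^2 + 4*s0 := by
      have hid : 2*r*(c*(q-2*r+s)) = c*(q^2-2*r^2+s^2) - c*(q-r)^2 - c*(r-s)^2 := by ring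
      nlinarith [hid, mul_nonneg hc0.le (sq_nonneg (r-s)),
        mul_le_mul_of_nonneg_left hfb (by linarith : (0:ℝ) ≤ 2*s0)]
    have hT2' : lam*(2*r*(c*(q-2*r+s) + s0*f r))
        ≤ lam*(c*(q^2-2*r^2+s^2)) - (1+14*s0)*(q-r)^2 + 4*lam*s0 := by
      have h1 := mul_le_mul_of_nonneg_left hT2 hlam0.le
      have h2 : lam*(c*(q-r)^2) = (1+14*s0)*(q-r)^2 := by
        rw [← hclam]; ring
      linarith [h1, h2]
    -- assemble
    linarith [hT1', hT2']
  have hS : ∀ k : ℤ, Y a k ≤ lam := by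
    intro k
    obtain ⟨hr0, hr1⟩ := hbox' a le_rfl k
    simp only [hY]
    have h5 : (U a k)^2 ≤ 1 := by nlinarith
    have h6 := mul_le_mul_of_nonneg_left h5 hlam0.le
    nlinarith [h6, sq_nonneg (U a (k+1) - U a k)]
  have hmp := discrete_max_principle c a t0 hc0.le hat0 Y Y' (1+lam) hbd hYcont hYderiv hsub lam hS
  have hfin := hmp t0 ⟨hat0, le_rfl⟩ k0
  simp only [hY] at hfin
  have h1 : t0 - a = 1 := by simp only [haa]; ring
  rw [h1] at hfin
  obtain ⟨hr0, hr1⟩ := hbox' t0 hat0 k0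
  have hg2 : (U t0 (k0+1) - U t0 k0)^2 ≤ lam*(1+4*s0) := by nlinarith [hfin]
  have h2 : ((n:ℝ) * |U t0 (k0+1) - U t0 k0|)^2 ≤ 2*(1+14*s0)*(1+4*s0)/m := by
    have h3 : ((n:ℝ) * |U t0 (k0+1) - U t0 k0|)^2 = (n:ℝ)^2 * (U t0 (k0+1) - U t0 k0)^2 := by
      rw [mul_pow, sq_abs]
    rw [h3]
    have h4 : (n:ℝ)^2 * (lam*(1+4*s0)) = 2*(1+14*s0)*(1+4*s0)/m := by
      simp only [hlam]
      field_simp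
    nlinarith [mul_le_mul_of_nonneg_left hg2 (by positivity : (0:ℝ) ≤ (n:ℝ)^2), h4]
  calc (n:ℝ) * |U t0 (k0+1) - U t0 k0|
      = Real.sqrt (((n:ℝ) * |U t0 (k0+1) - U t0 k0|)^2) := by
        rw [Real.sqrt_sq (by positivity)]
    _ ≤ Real.sqrt (2*(1+14*s0)*(1+4*s0)/m) := Real.sqrt_le_sqrt h2
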